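/- Existence and uniqueness of the Wardrop equilibrium: given any service capacities N₁, …, N_k ∈ ℕ with Nᵢ ≥ 1 for all i, any total arrival rate Λ > 0 and any mean service rate μ > 0, there exists a unique vector (λ₁, …, λ_k) with λᵢ > 0 for all i, ∑ᵢ λᵢ = Λ, and B(Nᵢ, λᵢ/μ) = B(Nⱼ, λⱼ/μ) for all i, j. -/

import Mathlib

/-- The Erlang-B blocking probability with `M` servers and offered load `a`:
`B(M, a) = (a^M / M!) / (∑_{j=0}^{M} a^j / j!)`. -/
noncomputable def ErlangB (M : ℕ) (a : ℝ) : ℝ :=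
  (a ^ M / (Nat.factorial M : ℝ)) / (∑ j ∈ Finset.range (M + 1), a ^ j / (Nat.factorial j : ℝ))

/-- Given service capacities `N₁, …, N_k` (each `≥ 1`), a total arrival rate `Λ > 0` and a
mean service rate `μ > 0`, a Wardrop equilibrium is a vector `(λ₁, …, λ_k)` of arrival
rates with `λᵢ > 0` for all `i`, `∑ᵢ λᵢ = Λ`, and equal blocking probabilities
`B(Nᵢ, λᵢ/μ) = B(Nⱼ, λⱼ/μ)` for all `i, j`. -/
def IsWardropEquilibrium (k : ℕ) (N : Fin k → ℕ) (μ Λ : ℝ) (lam : Fin k → ℝ) : Prop :=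
  (∀ i, 0 < lam i) ∧ (∑ i, lam i = Λ) ∧
    ∀ i j, ErlangB (N i) (lam i / μ) = ErlangB (N j) (lam j / μ)

open Finset Set

lemma erlang_denom_pos (M : ℕ) {a : ℝ} (ha : 0 ≤ a) :
    0 < ∑ j ∈ Finset.range (M + 1), a ^ j / (Nat.factorial j : ℝ) := by
  apply Finset.sum_pos'
  · intro j _
    positivity
  · exact ⟨0, Finset.mem_range.mpr (Nat.succ_pos M), by norm_num⟩

lemma erlangB_pos (M : ℕ) {a : ℝ} (ha : 0 < a) : 0 < ErlangB M a :=
  div_pos (by positivity) (erlang_denom_pos M ha.le)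

lemma erlangB_zero {M : ℕ} (hM : 1 ≤ M) : ErlangB M 0 = 0 := by
  unfold ErlangB
  rw [zero_pow (by omega), zero_div, zero_div]

lemma erlangB_lt_one {M : ℕ} (hM : 1 ≤ M) {a : ℝ} (ha : 0 ≤ a) : ErlangB M a < 1 := by
  unfold ErlangB
  rw [div_lt_one (erlang_denom_pos M ha), Finset.sum_range_succ]
  have h1 : (1 : ℝ) ≤ ∑ j ∈ Finset.range M, a ^ j / (Nat.factorial j : ℝ) := by
    have h0 : (0:ℕ) ∈ Finset.range M := Finset.mem_range.mpr hM
    calc (1:ℝ) = a ^ 0 / (Nat.factorial 0 : ℝ) := by norm_num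
    _ ≤ _ := Finset.single_le_sum (f := fun j => a ^ j / (Nat.factorial j : ℝ))
      (fun j _ => div_nonneg (pow_nonneg ha j) (by positivity)) h0
  linarith

lemma erlangB_strictMonoOn {M : ℕ} (hM : 1 ≤ M) : StrictMonoOn (ErlangB M) (Set.Ici 0) := by
  intro a ha a' ha' hlt
  simp only [Set.mem_Ici] at ha ha'
  unfold ErlangB
  rw [div_lt_div_iff₀ (erlang_denom_pos M ha) (erlang_denom_pos M ha'), Finset.mul_sum,
    Finset.mul_sum]
  apply Finset.sum_lt_sum
  · intro j hj
    have hjM : j ≤ M := Nat.lt_succ_iff.mp (Finset.mem_range.mp hj)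
    have key : a ^ M * a' ^ j ≤ a' ^ M * a ^ j := by
      have e1 : a ^ M = a ^ j * a ^ (M - j) := by rw [← pow_add]; congr 1; omega
      have e2 : a' ^ M = a' ^ j * a' ^ (M - j) := by rw [← pow_add]; congr 1; omega
      calc a ^ M * a' ^ j = (a ^ j * a' ^ j) * a ^ (M - j) := by rw [e1]; ring
        _ ≤ (a ^ j * a' ^ j) * a' ^ (M - j) := by
            apply mul_le_mul_of_nonneg_left (pow_le_pow_left₀ ha hlt.le _) (by positivity)
        _ = a' ^ M * a ^ j := by rw [e2]; ring
    calc a ^ M / (Nat.factorial M : ℝ) * (a' ^ j / (Nat.factorial j : ℝ))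
        = (a ^ M * a' ^ j) / ((Nat.factorial M : ℝ) * (Nat.factorial j : ℝ)) := by
          rw [div_mul_div_comm]
      _ ≤ (a' ^ M * a ^ j) / ((Nat.factorial M : ℝ) * (Nat.factorial j : ℝ)) := by
          gcongr
      _ = a' ^ M / (Nat.factorial M : ℝ) * (a ^ j / (Nat.factorial j : ℝ)) := by
          rw [div_mul_div_comm]
  · refine ⟨0, Finset.mem_range.mpr (Nat.succ_pos M), ?_⟩
    simp only [pow_zero, Nat.factorial_zero, Nat.cast_one, div_one, mul_one]
    gcongr

lemma erlangB_continuousOn (M : ℕ) : ContinuousOn (ErlangB M) (Set.Ici 0) := by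
  have h : ErlangB M = fun a : ℝ => (a ^ M / (Nat.factorial M : ℝ)) /
      (∑ j ∈ Finset.range (M + 1), a ^ j / (Nat.factorial j : ℝ)) := rfl
  rw [h]
  apply ContinuousOn.div
  · exact ((continuous_pow M).div_const _).continuousOn
  · exact (continuous_finset_sum _ fun j _ => (continuous_pow j).div_const _).continuousOn
  · intro a ha
    exact (erlang_denom_pos M ha).ne'

lemma erlangB_large {M : ℕ} (hM : 1 ≤ M) {b : ℝ} (hb : b < 1) :
    ∃ A, 0 < A ∧ b < ErlangB M A := by
  rcases le_or_gt b 0 with hb0 | hb0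
  · exact ⟨1, one_pos, hb0.trans_lt (erlangB_pos M one_pos)⟩
  obtain ⟨m, rfl⟩ : ∃ m, M = m + 1 := ⟨M - 1, (Nat.succ_pred_eq_of_pos hM).symm⟩
  set Q : ℝ := (Nat.factorial (m + 1) : ℝ) with hQ
  have hQ0 : (0:ℝ) < Q := by positivity
  set A : ℝ := max 1 (b * (m + 1) * Q / (1 - b) + 1) with hA
  have hA1 : (1:ℝ) ≤ A := le_max_left _ _
  have hA0 : (0:ℝ) < A := lt_of_lt_of_le one_pos hA1
  have hkey : b * (m + 1) * Q < A * (1 - b) := by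
    have h1b : (0:ℝ) < 1 - b := by linarith
    have h2 : b * (m + 1) * Q / (1 - b) + 1 ≤ A := le_max_right _ _
    have h3 : (b * (m + 1) * Q / (1 - b)) * (1 - b) = b * (m + 1) * Q := by
      field_simp
    nlinarith
  refine ⟨A, hA0, ?_⟩
  unfold ErlangB
  rw [lt_div_iff₀ (erlang_denom_pos _ hA0.le)]
  rw [Finset.sum_range_succ]
  have hR : (∑ j ∈ Finset.range (m + 1), A ^ j / (Nat.factorial j : ℝ)) ≤ (m + 1) * A ^ m := by
    calc (∑ j ∈ Finset.range (m + 1), A ^ j / (Nat.factorial j : ℝ))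
        ≤ ∑ _j ∈ Finset.range (m + 1), A ^ m := by
          apply Finset.sum_le_sum
          intro j hj
          have hj' : j ≤ m := Nat.lt_succ_iff.mp (Finset.mem_range.mp hj)
          calc A ^ j / (Nat.factorial j : ℝ) ≤ A ^ j := by
                apply div_le_self (by positivity)
                exact_mod_cast Nat.one_le_iff_ne_zero.mpr (Nat.factorial_ne_zero j)
            _ ≤ A ^ m := pow_le_pow_right₀ hA1 hj'
      _ = (m + 1) * A ^ m := by
          rw [Finset.sum_const, Finset.card_range, nsmul_eq_mul]
          push_cast
          ring
  have hAm : (0:ℝ) < A ^ m := by positivity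
  have hpow : A ^ (m + 1) = A * A ^ m := by ring
  have h1b : (0:ℝ) < 1 - b := by linarith
  have hgoal : b * ((m + 1) * A ^ m) + b * (A ^ (m + 1) / Q) < A ^ (m + 1) / Q := by
    rw [hpow]
    have e : A * A ^ m / Q * Q = A * A ^ m := div_mul_cancel₀ _ hQ0.ne'
    rw [lt_div_iff₀ hQ0]
    nlinarith [mul_lt_mul_of_pos_right hkey hAm, e]
  calc b * (∑ j ∈ Finset.range (m + 1), A ^ j / (Nat.factorial j : ℝ) + A ^ (m + 1) / Q)
      = b * (∑ j ∈ Finset.range (m + 1), A ^ j / (Nat.factorial j : ℝ)) + b * (A ^ (m + 1) / Q) := by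
        ring
    _ ≤ b * ((m + 1) * A ^ m) + b * (A ^ (m + 1) / Q) := by
        have := mul_le_mul_of_nonneg_left hR hb0.le
        linarith
    _ < A ^ (m + 1) / Q := hgoal

lemma erlangB_surj {M : ℕ} (hM : 1 ≤ M) {b : ℝ} (hb0 : 0 < b) (hb1 : b < 1) :
    ∃ a, 0 < a ∧ ErlangB M a = b := by
  obtain ⟨A, hA, hbA⟩ := erlangB_large hM hb1
  have hsub : Set.Icc (0:ℝ) A ⊆ Set.Ici 0 := Set.Icc_subset_Ici_self
  have h := intermediate_value_Icc hA.le ((erlangB_continuousOn M).mono hsub)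
  have hbmem : b ∈ Set.Icc (ErlangB M 0) (ErlangB M A) := by
    rw [erlangB_zero hM]
    exact ⟨hb0.le, hbA.le⟩
  obtain ⟨a, haIcc, hae⟩ := h hbmem
  refine ⟨a, ?_, hae⟩
  rcases haIcc.1.lt_or_eq with h0 | h0
  · exact h0
  · rw [← h0, erlangB_zero hM] at hae
    linarith

open Classical in
noncomputable def psiB (M : ℕ) (b : ℝ) : ℝ :=
  if h : ∃ a, 0 < a ∧ ErlangB M a = b then h.choose else 0

lemma psiB_spec {M : ℕ} (hM : 1 ≤ M) {b : ℝ} (hb0 : 0 < b) (hb1 : b < 1) :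
    0 < psiB M b ∧ ErlangB M (psiB M b) = b := by
  have h := erlangB_surj hM hb0 hb1
  rw [psiB]
  rw [dif_pos h]
  exact h.choose_spec

lemma erlangB_inj {M : ℕ} (hM : 1 ≤ M) {a a' : ℝ} (ha : 0 ≤ a) (ha' : 0 ≤ a')
    (h : ErlangB M a = ErlangB M a') : a = a' :=
  (erlangB_strictMonoOn hM).injOn ha ha' h

lemma psiB_eq {M : ℕ} (hM : 1 ≤ M) {a : ℝ} (ha : 0 < a) :
    psiB M (ErlangB M a) = a := by
  obtain ⟨hp, he⟩ := psiB_spec hM (erlangB_pos M ha) (erlangB_lt_one hM ha.le)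
  exact erlangB_inj hM hp.le ha.le he

lemma erlangB_monoOn {M : ℕ} (hM : 1 ≤ M) {a a' : ℝ} (ha : 0 ≤ a) (ha' : 0 ≤ a')
    (h : a ≤ a') : ErlangB M a ≤ ErlangB M a' :=
  ((erlangB_strictMonoOn hM).monotoneOn) ha ha' h

lemma psiB_lt_of_lt {M : ℕ} (hM : 1 ≤ M) {b : ℝ} (hb0 : 0 < b) (hb1 : b < 1)
    {a : ℝ} (ha : 0 < a) (h : b < ErlangB M a) : psiB M b < a := by
  obtain ⟨hp, he⟩ := psiB_spec hM hb0 hb1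
  by_contra hc
  push_neg at hc
  have := erlangB_monoOn hM ha.le hp.le hc
  rw [he] at this
  linarith

lemma lt_psiB_of_lt {M : ℕ} (hM : 1 ≤ M) {b : ℝ} (hb0 : 0 < b) (hb1 : b < 1)
    {a : ℝ} (ha : 0 ≤ a) (h : ErlangB M a < b) : a < psiB M b := by
  obtain ⟨hp, he⟩ := psiB_spec hM hb0 hb1
  by_contra hc
  push_neg at hc
  have := erlangB_monoOn hM hp.le ha hc
  rw [he] at this
  linarith

lemma psiB_le_of_le {M : ℕ} (hM : 1 ≤ M) {b : ℝ} (hb0 : 0 < b) (hb1 : b < 1)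
    {a : ℝ} (ha : 0 < a) (h : b ≤ ErlangB M a) : psiB M b ≤ a := by
  obtain ⟨hp, he⟩ := psiB_spec hM hb0 hb1
  by_contra hc
  push_neg at hc
  have := erlangB_strictMonoOn hM (Set.mem_Ici.mpr ha.le) (Set.mem_Ici.mpr hp.le) hc
  rw [he] at this
  linarith

lemma psiB_strictMonoOn {M : ℕ} (hM : 1 ≤ M) : StrictMonoOn (psiB M) (Set.Ioo 0 1) := by
  intro b hb b' hb' hlt
  obtain ⟨hp, he⟩ := psiB_spec hM hb.1 hb.2
  have : b < ErlangB M (psiB M b') := by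
    rw [(psiB_spec hM hb'.1 hb'.2).2]
    exact hlt
  have h2 := psiB_lt_of_lt hM hb.1 hb.2 (psiB_spec hM hb'.1 hb'.2).1 this
  exact h2

lemma psiB_continuousOn {M : ℕ} (hM : 1 ≤ M) : ContinuousOn (psiB M) (Set.Ioo 0 1) := by
  intro b hb
  obtain ⟨ha0, hae⟩ := psiB_spec hM hb.1 hb.2
  rw [Metric.continuousWithinAt_iff]
  intro ε hε
  set a := psiB M b with ha_def
  set ε' := min ε a / 2 with hε'def
  have hε'0 : 0 < ε' := by
    have := lt_min hε ha0
    positivity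
  have hε'a : ε' < a := by
    have : min ε a ≤ a := min_le_right _ _
    rw [hε'def]
    linarith
  have hε'ε : ε' < ε := by
    have : min ε a ≤ ε := min_le_left _ _
    rw [hε'def]
    linarith
  have hlow : 0 < a - ε' := by linarith
  have hBlo : ErlangB M (a - ε') < b := by
    have := erlangB_strictMonoOn hM (Set.mem_Ici.mpr hlow.le) (Set.mem_Ici.mpr ha0.le)
      (by linarith)
    rwa [hae] at this
  have hBhi : b < ErlangB M (a + ε') := by
    have := erlangB_strictMonoOn hM (Set.mem_Ici.mpr ha0.le)
      (Set.mem_Ici.mpr (by linarith : (0:ℝ) ≤ a + ε')) (by linarith)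
    rwa [hae] at this
  refine ⟨min (b - ErlangB M (a - ε')) (ErlangB M (a + ε') - b),
    lt_min (by linarith) (by linarith), ?_⟩
  intro x hx hdist
  rw [Real.dist_eq, abs_lt] at hdist
  have hd1 : min (b - ErlangB M (a - ε')) (ErlangB M (a + ε') - b) ≤ b - ErlangB M (a - ε') :=
    min_le_left _ _
  have hd2 : min (b - ErlangB M (a - ε')) (ErlangB M (a + ε') - b) ≤ ErlangB M (a + ε') - b :=
    min_le_right _ _
  have hx1 : ErlangB M (a - ε') < x := by linarith
  have hx2 : x < ErlangB M (a + ε') := by linarith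
  have hy1 := lt_psiB_of_lt hM hx.1 hx.2 hlow.le hx1
  have hy2 := psiB_lt_of_lt hM hx.1 hx.2 (by linarith : (0:ℝ) < a + ε') hx2
  rw [Real.dist_eq, abs_lt]
  constructor <;> [linarith; linarith]

/-- Existence and uniqueness of the Wardrop equilibrium: for any service capacities
`N₁, …, N_k ∈ ℕ` with `Nᵢ ≥ 1`, any total arrival rate `Λ > 0` and any mean service
rate `μ > 0`, there exists a unique Wardrop equilibrium. -/
theorem wardrop_existence_uniqueness (k : ℕ) (hk : 1 ≤ k) (N : Fin k → ℕ)
    (hN : ∀ i, 1 ≤ N i) (Λ μ : ℝ) (hΛ : 0 < Λ) (hμ : 0 < μ) :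
    ∃! lam : Fin k → ℝ, IsWardropEquilibrium k N μ Λ lam := by
  have hne : Nonempty (Fin k) := ⟨⟨0, hk⟩⟩
  have huniv : (Finset.univ : Finset (Fin k)).Nonempty := Finset.univ_nonempty
  set i₀ : Fin k := ⟨0, hk⟩
  set c := Λ / μ with hc
  have hc0 : 0 < c := div_pos hΛ hμ
  set g : ℝ → ℝ := fun b => ∑ i, psiB (N i) b with hg
  have hgmono : StrictMonoOn g (Set.Ioo 0 1) := by
    intro b hb b' hb' hlt
    apply Finset.sum_lt_sum_of_nonempty huniv
    intro i _
    exact psiB_strictMonoOn (hN i) hb hb' hlt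
  have hgcont : ContinuousOn g (Set.Ioo 0 1) :=
    continuousOn_finset_sum _ fun i _ => psiB_continuousOn (hN i)
  set ε : ℝ := c / (2 * k) with hεdef
  have hk0 : (0:ℝ) < k := by exact_mod_cast hk
  have hε0 : 0 < ε := by positivity
  set blo : ℝ := Finset.univ.inf' huniv (fun i => ErlangB (N i) ε) with hblo
  have hblo0 : 0 < blo := by
    rw [hblo, Finset.lt_inf'_iff]
    intro i _
    exact erlangB_pos _ hε0
  have hblo1 : blo < 1 :=
    lt_of_le_of_lt (Finset.inf'_le _ (Finset.mem_univ i₀)) (erlangB_lt_one (hN i₀) hε0.le)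
  have hglo : g blo ≤ c / 2 := by
    have hterm : ∀ i : Fin k, psiB (N i) blo ≤ ε := fun i =>
      psiB_le_of_le (hN i) hblo0 hblo1 hε0 (Finset.inf'_le _ (Finset.mem_univ i))
    calc g blo ≤ ∑ _i : Fin k, ε := Finset.sum_le_sum fun i _ => hterm i
      _ = k * ε := by rw [Finset.sum_const, Finset.card_univ, Fintype.card_fin, nsmul_eq_mul]
      _ = c / 2 := by rw [hεdef]; field_simp
  have hglo' : g blo < c := by linarith
  set bhi : ℝ := ErlangB (N i₀) (c + 1) with hbhi
  have hbhi0 : 0 < bhi := erlangB_pos _ (by linarith)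
  have hbhi1 : bhi < 1 := erlangB_lt_one (hN i₀) (by linarith)
  have hpsihi : psiB (N i₀) bhi = c + 1 := psiB_eq (hN i₀) (by linarith)
  have hghi : c + 1 ≤ g bhi := by
    rw [← hpsihi]
    exact Finset.single_le_sum (f := fun i => psiB (N i) bhi)
      (fun i _ => (psiB_spec (hN i) hbhi0 hbhi1).1.le) (Finset.mem_univ i₀)
  have hghi' : c < g bhi := by linarith
  have hble : blo ≤ bhi := by
    by_contra hcon
    push_neg at hcon
    have := hgmono ⟨hbhi0, hbhi1⟩ ⟨hblo0, hblo1⟩ hcon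
    linarith
  have hsub : Set.Icc blo bhi ⊆ Set.Ioo 0 1 := Set.Icc_subset_Ioo hblo0 hbhi1
  obtain ⟨bs, hbsIcc, hbsg⟩ :=
    intermediate_value_Icc hble (hgcont.mono hsub) ⟨hglo'.le, hghi'.le⟩
  have hbs : bs ∈ Set.Ioo (0:ℝ) 1 := hsub hbsIcc
  set lam : Fin k → ℝ := fun i => μ * psiB (N i) bs with hlam
  have hlamspec : ∀ i, 0 < psiB (N i) bs ∧ ErlangB (N i) (psiB (N i) bs) = bs :=
    fun i => psiB_spec (hN i) hbs.1 hbs.2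
  have hdiv : ∀ i, lam i / μ = psiB (N i) bs := fun i =>
    mul_div_cancel_left₀ _ hμ.ne'
  refine ⟨lam, ⟨?_, ?_, ?_⟩, ?_⟩
  · intro i; exact mul_pos hμ (hlamspec i).1
  · show (∑ i, μ * psiB (N i) bs) = Λ
    rw [← Finset.mul_sum]
    have hbsg' : (∑ i, psiB (N i) bs) = c := hbsg
    rw [hbsg', hc, mul_div_cancel₀ _ hμ.ne']
  · intro i j
    rw [hdiv i, hdiv j, (hlamspec i).2, (hlamspec j).2]
  · rintro lam' ⟨hpos', hsum', heq'⟩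
    set b' := ErlangB (N i₀) (lam' i₀ / μ) with hb'
    have hdi : ∀ i, 0 < lam' i / μ := fun i => div_pos (hpos' i) hμ
    have hb'0 : 0 < b' := erlangB_pos _ (hdi i₀)
    have hb'1 : b' < 1 := erlangB_lt_one (hN i₀) (hdi i₀).le
    have hpsi' : ∀ i, psiB (N i) b' = lam' i / μ := by
      intro i
      rw [hb', ← heq' i i₀]
      exact psiB_eq (hN i) (hdi i)
    have hgb' : g b' = c := by
      show (∑ i, psiB (N i) b') = c
      rw [Finset.sum_congr rfl (fun i _ => hpsi' i), ← Finset.sum_div, hsum']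
    have hbb : b' = bs := by
      apply hgmono.injOn ⟨hb'0, hb'1⟩ hbs
      rw [hgb', hbsg]
    funext i
    show lam' i = μ * psiB (N i) bs
    rw [← hbb, hpsi' i]
    field_simp
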